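/- Let n ≥ max(2m,3) with m ≥ 1, and let M ∈ Mₙ(ℂ) satisfy det M = 1 and Mᵀ H M̄ = H. Then the following are equivalent: (i) M_{i1} = 0 for all i = 2,…,n (i.e., M lies in the parabolic subgroup P¹ of SLₙ(ℂ) of matrices whose first column has zeros below the first entry); (ii) M_{nj} = 0 for all j = 1,…,n−1 (i.e., M lies in the parabolic subgroup P² of matrices whose last row has zeros before the last entry); (iii) M has the block form with first row (μ, −μ x̄ᵀH′A, c), middle block rows (0, A, x), last row (0, 0, 1/μ̄), for some μ, c ∈ ℂ with μ ≠ 0, x ∈ ℂ^{n−2}, and A with Aᵀ H′ Ā = H′ and 2 Re(c/μ) + xᵀ H′ x̄ = 0. In other words, P¹ ∩ SU(H) = P² ∩ SU(H) = S₁, where S₁ is the set of matrices of the stated block form with determinant 1. -/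

import Mathlib

/- The standard Hermitian matrix of signature (n-m, m) in the anti-diagonal
block form (formformaminus) of the paper; for the parameters (n-2, m-1) it is
the central block H′ of Hmat n m. -/
def Hmat (n m : ℕ) : Matrix (Fin n) (Fin n) ℂ := fun i j =>
  if i.1 + j.1 + 1 = n ∧ (i.1 < m ∨ n ≤ i.1 + m) then 1
  else if i = j ∧ m ≤ i.1 ∧ i.1 + m < n then 1 else 0

/-- The permutation underlying Hmat. -/
def sig (n m : ℕ) (i : Fin n) : Fin n :=
  ⟨if i.1 < m ∨ n ≤ i.1 + m then n - 1 - i.1 else i.1, by have := i.isLt; split <;> omega⟩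

lemma Hmat_apply (n m : ℕ) (hnm : 2 * m ≤ n) (i j : Fin n) :
    Hmat n m i j = if j = sig n m i then 1 else 0 := by
  have hi := i.isLt; have hj := j.isLt
  simp only [Hmat, sig, Fin.ext_iff]
  split_ifs <;> first | rfl | (exfalso; omega)

lemma sig_sig (n m : ℕ) (hnm : 2 * m ≤ n) (i : Fin n) : sig n m (sig n m i) = i := by
  have hi := i.isLt
  simp only [sig, Fin.ext_iff]
  split_ifs <;> omega

lemma Hmat_mul_self (n m : ℕ) (hnm : 2 * m ≤ n) : Hmat n m * Hmat n m = 1 := by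
  ext i j
  rw [Matrix.mul_apply]
  simp only [Hmat_apply n m hnm, ite_mul, one_mul, zero_mul]
  rw [Finset.sum_ite_eq' Finset.univ (sig n m i) (fun k => if j = sig n m k then (1:ℂ) else 0)]
  simp [sig_sig n m hnm, Matrix.one_apply, eq_comm]

lemma pos3 {n : ℕ} (hn : 3 ≤ n) : 0 < n := by omega

lemma lt3 {n : ℕ} (hn : 3 ≤ n) : n - 1 < n := by omega

lemma sig_zero (n m : ℕ) (hm : 1 ≤ m) (hn : 3 ≤ n) :
    sig n m ⟨0, pos3 hn⟩ = ⟨n - 1, lt3 hn⟩ := by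
  simp only [sig, Fin.ext_iff]; split_ifs <;> omega

lemma sig_last (n m : ℕ) (hm : 1 ≤ m) (hn : 3 ≤ n) :
    sig n m ⟨n - 1, lt3 hn⟩ = ⟨0, pos3 hn⟩ := by
  simp only [sig, Fin.ext_iff]; split_ifs <;> omega

lemma sig_mid (n m : ℕ) (hm : 1 ≤ m) (hn : 3 ≤ n) (k : Fin (n - 2)) :
    sig n m ⟨k.1 + 1, by have := k.isLt; omega⟩
      = ⟨(sig (n - 2) (m - 1) k).1 + 1, by have := (sig (n - 2) (m - 1) k).isLt; omega⟩ := by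
  have hk := k.isLt
  simp only [sig, Fin.ext_iff]
  split_ifs <;> omega

lemma Hmat_mid (n m : ℕ) (hm : 1 ≤ m) (hn : 3 ≤ n) (hnm : 2 * m ≤ n) (k l : Fin (n - 2)) :
    Hmat n m ⟨k.1 + 1, by have := k.isLt; omega⟩ ⟨l.1 + 1, by have := l.isLt; omega⟩
      = Hmat (n - 2) (m - 1) k l := by
  rw [Hmat_apply n m hnm, Hmat_apply (n - 2) (m - 1) (by omega), sig_mid n m hm hn]
  simp [Fin.ext_iff]

lemma sum_fin_split (n : ℕ) (hn : 3 ≤ n) (f : Fin n → ℂ) :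
    ∑ k, f k = f ⟨0, by omega⟩ + (∑ k : Fin (n - 2), f ⟨k.1 + 1, by have := k.isLt; omega⟩)
      + f ⟨n - 1, by omega⟩ := by
  obtain ⟨p, rfl⟩ : ∃ p, n = p + 2 := ⟨n - 2, by omega⟩
  rw [Fin.sum_univ_succ, Fin.sum_univ_castSucc, ← add_assoc]
  rfl

lemma colrel (n m : ℕ) (hnm : 2 * m ≤ n) (M : Matrix (Fin n) (Fin n) ℂ)
    (hM : M.transpose * Hmat n m * M.map (starRingEnd ℂ) = Hmat n m) (i j : Fin n) :
    ∑ k, M k i * (starRingEnd ℂ) (M (sig n m k) j) = Hmat n m i j := by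
  have h := congrFun (congrFun (congrArg (fun X => X) hM) i) j
  rw [Matrix.mul_assoc] at hM
  have h2 := congrFun (congrFun hM i) j
  rw [Matrix.mul_apply] at h2
  rw [← h2]
  apply Finset.sum_congr rfl
  intro k _
  rw [Matrix.transpose_apply, Matrix.mul_apply]
  congr 1
  simp only [Hmat_apply n m hnm, Matrix.map_apply, ite_mul, one_mul, zero_mul]
  rw [Finset.sum_ite_eq' Finset.univ (sig n m k) (fun l => (starRingEnd ℂ) (M l j))]
  simp

lemma rowrel (n m : ℕ) (hnm : 2 * m ≤ n) (M : Matrix (Fin n) (Fin n) ℂ)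
    (hM : M.transpose * Hmat n m * M.map (starRingEnd ℂ) = Hmat n m) (i j : Fin n) :
    ∑ k, (starRingEnd ℂ) (M i k) * M j (sig n m k) = Hmat n m i j := by
  have hrow : M.map (starRingEnd ℂ) * (Hmat n m * M.transpose) = Hmat n m := by
    have h1 : (Hmat n m * M.transpose * Hmat n m) * M.map (starRingEnd ℂ) = 1 := by
      calc (Hmat n m * M.transpose * Hmat n m) * M.map (starRingEnd ℂ)
          = Hmat n m * (M.transpose * Hmat n m * M.map (starRingEnd ℂ)) := by
            simp only [Matrix.mul_assoc]
        _ = 1 := by rw [hM, Hmat_mul_self n m hnm]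
    have h2 : M.map (starRingEnd ℂ) * (Hmat n m * M.transpose * Hmat n m) = 1 :=
      mul_eq_one_comm.mp h1
    calc M.map (starRingEnd ℂ) * (Hmat n m * M.transpose)
        = M.map (starRingEnd ℂ) * (Hmat n m * M.transpose * Hmat n m) * Hmat n m := by
          simp only [Matrix.mul_assoc, Hmat_mul_self n m hnm, Matrix.mul_one]
      _ = Hmat n m := by rw [h2, Matrix.one_mul]
  have h2 := congrFun (congrFun hrow i) j
  rw [Matrix.mul_apply] at h2
  rw [← h2]
  apply Finset.sum_congr rfl
  intro k _
  rw [Matrix.map_apply, Matrix.mul_apply]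
  congr 1
  simp only [Hmat_apply n m hnm, Matrix.transpose_apply, ite_mul, one_mul, zero_mul]
  rw [Finset.sum_ite_eq' Finset.univ (sig n m k) (fun l => M j l)]
  simp

lemma colsplit (n m : ℕ) (hm : 1 ≤ m) (hn : 3 ≤ n) (hnm : 2 * m ≤ n)
    (M : Matrix (Fin n) (Fin n) ℂ)
    (hM : M.transpose * Hmat n m * M.map (starRingEnd ℂ) = Hmat n m) (i j : Fin n) :
    M ⟨0, pos3 hn⟩ i * (starRingEnd ℂ) (M ⟨n - 1, lt3 hn⟩ j)
    + (∑ k : Fin (n - 2), M ⟨k.1 + 1, by have := k.isLt; omega⟩ i *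
        (starRingEnd ℂ) (M ⟨(sig (n - 2) (m - 1) k).1 + 1,
          by have := (sig (n - 2) (m - 1) k).isLt; omega⟩ j))
    + M ⟨n - 1, lt3 hn⟩ i * (starRingEnd ℂ) (M ⟨0, pos3 hn⟩ j) = Hmat n m i j := by
  have h := colrel n m hnm M hM i j
  rw [sum_fin_split n hn (fun k => M k i * (starRingEnd ℂ) (M (sig n m k) j))] at h
  rw [← h, sig_zero n m hm hn, sig_last n m hm hn]
  congr 2
  apply Finset.sum_congr rfl
  intro k _
  rw [sig_mid n m hm hn k]

lemma p1_facts (n m : ℕ) (hm : 1 ≤ m) (hn : 3 ≤ n) (hnm : 2 * m ≤ n)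
    (M : Matrix (Fin n) (Fin n) ℂ)
    (hM : M.transpose * Hmat n m * M.map (starRingEnd ℂ) = Hmat n m)
    (hP1 : ∀ i : Fin n, i.1 ≠ 0 → M i ⟨0, pos3 hn⟩ = 0) :
    M ⟨0, pos3 hn⟩ ⟨0, pos3 hn⟩ ≠ 0 ∧
    M ⟨n - 1, lt3 hn⟩ ⟨n - 1, lt3 hn⟩
      = 1 / (starRingEnd ℂ) (M ⟨0, pos3 hn⟩ ⟨0, pos3 hn⟩) ∧
    ∀ j : Fin n, j.1 ≠ n - 1 → M ⟨n - 1, lt3 hn⟩ j = 0 := by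
  have key : ∀ j : Fin n, M ⟨0, by omega⟩ ⟨0, by omega⟩ *
      (starRingEnd ℂ) (M ⟨n - 1, by omega⟩ j) = Hmat n m ⟨0, by omega⟩ j := by
    intro j
    have h := colrel n m hnm M hM ⟨0, by omega⟩ j
    rw [Finset.sum_eq_single (⟨0, by omega⟩ : Fin n)
      (fun k _ hk => by
        rw [hP1 k (fun hc => hk (Fin.ext hc)), zero_mul])
      (fun hc => absurd (Finset.mem_univ _) hc)] at h
    rwa [sig_zero n m hm hn] at h
  have h1 : M ⟨0, by omega⟩ ⟨0, by omega⟩ *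
      (starRingEnd ℂ) (M ⟨n - 1, by omega⟩ ⟨n - 1, by omega⟩) = 1 := by
    have h := key ⟨n - 1, by omega⟩
    rwa [Hmat_apply n m hnm, sig_zero n m hm hn, if_pos rfl] at h
  have hμ : M ⟨0, by omega⟩ ⟨0, by omega⟩ ≠ 0 := left_ne_zero_of_mul_eq_one h1
  refine ⟨hμ, ?_, ?_⟩
  · have h2 : (starRingEnd ℂ) (M ⟨n - 1, by omega⟩ ⟨n - 1, by omega⟩)
        = (M ⟨0, by omega⟩ ⟨0, by omega⟩)⁻¹ := eq_inv_of_mul_eq_one_right h1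
    have h3 := congrArg (starRingEnd ℂ) h2
    simpa [map_inv₀, one_div] using h3
  · intro j hj
    have h := key j
    rw [Hmat_apply n m hnm, sig_zero n m hm hn,
      if_neg (fun hc => hj (congrArg Fin.val hc))] at h
    rcases mul_eq_zero.mp h with h' | h'
    · exact absurd h' hμ
    · rw [starRingEnd_apply] at h'; exact star_eq_zero.mp h'

lemma p2_imp_p1 (n m : ℕ) (hm : 1 ≤ m) (hn : 3 ≤ n) (hnm : 2 * m ≤ n)
    (M : Matrix (Fin n) (Fin n) ℂ)
    (hM : M.transpose * Hmat n m * M.map (starRingEnd ℂ) = Hmat n m)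
    (hP2 : ∀ j : Fin n, j.1 ≠ n - 1 → M ⟨n - 1, lt3 hn⟩ j = 0) :
    ∀ i : Fin n, i.1 ≠ 0 → M i ⟨0, pos3 hn⟩ = 0 := by
  have key : ∀ j : Fin n, (starRingEnd ℂ) (M ⟨n - 1, by omega⟩ ⟨n - 1, by omega⟩) *
      M j ⟨0, by omega⟩ = Hmat n m ⟨n - 1, by omega⟩ j := by
    intro j
    have h := rowrel n m hnm M hM ⟨n - 1, by omega⟩ j
    rw [Finset.sum_eq_single (⟨n - 1, by omega⟩ : Fin n)
      (fun k _ hk => by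
        rw [hP2 k (fun hc => hk (Fin.ext hc)), map_zero, zero_mul])
      (fun hc => absurd (Finset.mem_univ _) hc)] at h
    rwa [sig_last n m hm hn] at h
  have h1 : (starRingEnd ℂ) (M ⟨n - 1, by omega⟩ ⟨n - 1, by omega⟩) *
      M ⟨0, by omega⟩ ⟨0, by omega⟩ = 1 := by
    have h := key ⟨0, by omega⟩
    rwa [Hmat_apply n m hnm, sig_last n m hm hn, if_pos rfl] at h
  have hν : (starRingEnd ℂ) (M ⟨n - 1, by omega⟩ ⟨n - 1, by omega⟩) ≠ 0 :=
    left_ne_zero_of_mul_eq_one h1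
  intro i hi
  have h := key i
  rw [Hmat_apply n m hnm, sig_last n m hm hn,
    if_neg (fun hc => hi (congrArg Fin.val hc))] at h
  rcases mul_eq_zero.mp h with h' | h'
  · exact absurd h' hν
  · exact h'


/-- The matrix of block form (formalgebra): first row (μ, −μ x̄ᵀH′A, c),
middle rows (0, A, x), last row (0, 0, 1/μ̄). -/
noncomputable def mkS (n m : ℕ) (μ c : ℂ) (x : Fin (n - 2) → ℂ)
    (A : Matrix (Fin (n - 2)) (Fin (n - 2)) ℂ) : Matrix (Fin n) (Fin n) ℂ :=
  fun i j =>
    if hi0 : i.1 = 0 then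
      if hj0 : j.1 = 0 then μ
      else if hjn : j.1 = n - 1 then c
      else -μ * ∑ k, ∑ l, (starRingEnd ℂ) (x k) * Hmat (n - 2) (m - 1) k l *
        A l ⟨j.1 - 1, by have := j.isLt; omega⟩
    else if hin : i.1 = n - 1 then
      (if j.1 = n - 1 then 1 / (starRingEnd ℂ) μ else 0)
    else
      if hj0 : j.1 = 0 then 0
      else if hjn : j.1 = n - 1 then x ⟨i.1 - 1, by have := i.isLt; omega⟩
      else A ⟨i.1 - 1, by have := i.isLt; omega⟩ ⟨j.1 - 1, by have := j.isLt; omega⟩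

def sigE (n m : ℕ) (hnm : 2 * m ≤ n) : Equiv (Fin n) (Fin n) :=
  ⟨sig n m, sig n m, sig_sig n m hnm, sig_sig n m hnm⟩

set_option maxRecDepth 4000 in
lemma exists_form (n m : ℕ) (hm : 1 ≤ m) (hn : 3 ≤ n) (hnm : 2 * m ≤ n)
    (M : Matrix (Fin n) (Fin n) ℂ)
    (hM : M.transpose * Hmat n m * M.map (starRingEnd ℂ) = Hmat n m)
    (hP1 : ∀ i : Fin n, i.1 ≠ 0 → M i ⟨0, pos3 hn⟩ = 0) :
    ∃ (μ c : ℂ) (x : Fin (n - 2) → ℂ) (A : Matrix (Fin (n - 2)) (Fin (n - 2)) ℂ),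
      μ ≠ 0 ∧
      A.transpose * Hmat (n - 2) (m - 1) * A.map (starRingEnd ℂ) = Hmat (n - 2) (m - 1) ∧
      2 * (c / μ).re + (dotProduct x ((Hmat (n - 2) (m - 1)).mulVec (star x))).re = 0 ∧
      M = mkS n m μ c x A := by
  obtain ⟨hμ, hnn, hP2⟩ := p1_facts n m hm hn hnm M hM hP1
  have hnm' : 2 * (m - 1) ≤ n - 2 := by omega
  have hstar_nn : (starRingEnd ℂ) (M ⟨n - 1, by omega⟩ ⟨n - 1, by omega⟩)
      = 1 / M ⟨0, by omega⟩ ⟨0, by omega⟩ := by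
    rw [hnn, map_div₀, map_one, Complex.conj_conj]
  refine ⟨M ⟨0, by omega⟩ ⟨0, by omega⟩, M ⟨0, by omega⟩ ⟨n - 1, by omega⟩,
    fun k => M ⟨k.1 + 1, by have := k.isLt; omega⟩ ⟨n - 1, by omega⟩,
    Matrix.of fun k l => M ⟨k.1 + 1, by have := k.isLt; omega⟩
      ⟨l.1 + 1, by have := l.isLt; omega⟩,
    hμ, ?_, ?_, ?_⟩
  · -- A preserves H'
    ext i j
    rw [Matrix.mul_assoc, Matrix.mul_apply]
    have inner : ∀ k : Fin (n - 2),
        (Hmat (n - 2) (m - 1) *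
            ((Matrix.of fun k l => M ⟨k.1 + 1, by have := k.isLt; omega⟩
              ⟨l.1 + 1, by have := l.isLt; omega⟩ :
                Matrix (Fin (n - 2)) (Fin (n - 2)) ℂ)).map (starRingEnd ℂ)) k j
          = (starRingEnd ℂ) (M ⟨(sig (n - 2) (m - 1) k).1 + 1,
              by have := (sig (n - 2) (m - 1) k).isLt; omega⟩
            ⟨j.1 + 1, by have := j.isLt; omega⟩) := by
      intro k
      rw [Matrix.mul_apply]
      simp only [Hmat_apply (n - 2) (m - 1) hnm', Matrix.map_apply, Matrix.of_apply,
        ite_mul, one_mul, zero_mul]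
      rw [Finset.sum_ite_eq' Finset.univ (sig (n - 2) (m - 1) k)]
      simp
    trans (∑ k : Fin (n - 2), M ⟨k.1 + 1, by have := k.isLt; omega⟩
        ⟨i.1 + 1, by have := i.isLt; omega⟩ *
        (starRingEnd ℂ) (M ⟨(sig (n - 2) (m - 1) k).1 + 1,
          by have := (sig (n - 2) (m - 1) k).isLt; omega⟩
          ⟨j.1 + 1, by have := j.isLt; omega⟩))
    · exact Finset.sum_congr rfl (fun k _ => by rw [Matrix.transpose_apply, inner k]; rfl)
    · have h := colsplit n m hm hn hnm M hM ⟨i.1 + 1, by have := i.isLt; omega⟩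
        ⟨j.1 + 1, by have := j.isLt; omega⟩
      rw [hP2 ⟨j.1 + 1, by have := j.isLt; omega⟩
          (by show j.1 + 1 ≠ n - 1; have := j.isLt; omega),
        hP2 ⟨i.1 + 1, by have := i.isLt; omega⟩
          (by show i.1 + 1 ≠ n - 1; have := i.isLt; omega)] at h
      rw [map_zero, mul_zero, zero_add, zero_mul, add_zero] at h
      rw [Hmat_mid n m hm hn hnm i j] at h
      exact h
  · -- scalar equation
    have h := colsplit n m hm hn hnm M hM ⟨n - 1, by omega⟩ ⟨n - 1, by omega⟩
    rw [hstar_nn, hnn] at h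
    have hH0 : Hmat n m ⟨n - 1, by omega⟩ ⟨n - 1, by omega⟩ = 0 := by
      rw [Hmat_apply n m hnm, sig_last n m hm hn, if_neg]
      simp only [ne_eq, Fin.mk.injEq]
      omega
    rw [hH0, mul_one_div] at h
    have hthird : (1 : ℂ) / (starRingEnd ℂ) (M ⟨0, by omega⟩ ⟨0, by omega⟩) *
        (starRingEnd ℂ) (M ⟨0, by omega⟩ ⟨n - 1, by omega⟩)
        = (starRingEnd ℂ) (M ⟨0, by omega⟩ ⟨n - 1, by omega⟩ / M ⟨0, by omega⟩ ⟨0, by omega⟩) := by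
      rw [map_div₀]; ring
    rw [hthird] at h
    have hdp : dotProduct
        (fun k : Fin (n - 2) => M ⟨k.1 + 1, by have := k.isLt; omega⟩ ⟨n - 1, by omega⟩)
        ((Hmat (n - 2) (m - 1)).mulVec
          (star (fun k : Fin (n - 2) => M ⟨k.1 + 1, by have := k.isLt; omega⟩ ⟨n - 1, by omega⟩)))
        = ∑ k : Fin (n - 2), M ⟨k.1 + 1, by have := k.isLt; omega⟩ ⟨n - 1, by omega⟩ *
            (starRingEnd ℂ) (M ⟨(sig (n - 2) (m - 1) k).1 + 1,
              by have := (sig (n - 2) (m - 1) k).isLt; omega⟩ ⟨n - 1, by omega⟩) := by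
      unfold dotProduct
      apply Finset.sum_congr rfl
      intro k _
      congr 1
      rw [Matrix.mulVec, dotProduct]
      simp only [Hmat_apply (n - 2) (m - 1) hnm', ite_mul, one_mul, zero_mul, Pi.star_apply]
      rw [Finset.sum_ite_eq' Finset.univ (sig (n - 2) (m - 1) k)]
      rw [if_pos (Finset.mem_univ _), starRingEnd_apply]
    rw [hdp]
    have hre := congrArg Complex.re h
    simp only [Complex.add_re, Complex.conj_re, Complex.zero_re] at hre
    linarith
  · -- M = mkS
    have hrowJ : ∀ j : Fin (n - 2),
        M ⟨0, by omega⟩ ⟨j.1 + 1, by have := j.isLt; omega⟩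
          = -(M ⟨0, by omega⟩ ⟨0, by omega⟩) *
            ∑ k, ∑ l, (starRingEnd ℂ)
                (M ⟨k.1 + 1, by have := k.isLt; omega⟩ ⟨n - 1, by omega⟩) *
              Hmat (n - 2) (m - 1) k l *
              M ⟨l.1 + 1, by have := l.isLt; omega⟩ ⟨j.1 + 1, by have := j.isLt; omega⟩ := by
      intro j
      have h := colsplit n m hm hn hnm M hM ⟨j.1 + 1, by have := j.isLt; omega⟩ ⟨n - 1, by omega⟩
      rw [hstar_nn] at h
      rw [hP2 ⟨j.1 + 1, by have := j.isLt; omega⟩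
        (by show j.1 + 1 ≠ n - 1; have := j.isLt; omega)] at h
      have hH0 : Hmat n m ⟨j.1 + 1, by have := j.isLt; omega⟩ ⟨n - 1, by omega⟩ = 0 := by
        rw [Hmat_apply n m hnm, sig_mid n m hm hn j, if_neg]
        simp only [ne_eq, Fin.mk.injEq]
        have := (sig (n - 2) (m - 1) j).isLt
        omega
      rw [hH0, zero_mul, add_zero, mul_one_div] at h
      -- rewrite the middle sum of h by the involution
      have hswap : (∑ k : Fin (n - 2), M ⟨k.1 + 1, by have := k.isLt; omega⟩
            ⟨j.1 + 1, by have := j.isLt; omega⟩ *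
            (starRingEnd ℂ) (M ⟨(sig (n - 2) (m - 1) k).1 + 1,
              by have := (sig (n - 2) (m - 1) k).isLt; omega⟩ ⟨n - 1, by omega⟩))
          = ∑ k : Fin (n - 2), (starRingEnd ℂ)
              (M ⟨k.1 + 1, by have := k.isLt; omega⟩ ⟨n - 1, by omega⟩) *
              M ⟨(sig (n - 2) (m - 1) k).1 + 1,
                by have := (sig (n - 2) (m - 1) k).isLt; omega⟩
                ⟨j.1 + 1, by have := j.isLt; omega⟩ := by
        apply Fintype.sum_equiv (sigE (n - 2) (m - 1) hnm')
        intro k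
        simp only [sigE, Equiv.coe_fn_mk]
        rw [show (⟨(sig (n - 2) (m - 1) (sig (n - 2) (m - 1) k)).1 + 1,
            by have := (sig (n - 2) (m - 1) (sig (n - 2) (m - 1) k)).isLt; omega⟩ : Fin n)
          = ⟨k.1 + 1, by have := k.isLt; omega⟩
          from Fin.ext (by show (sig (n - 2) (m - 1) (sig (n - 2) (m - 1) k)).1 + 1 = k.1 + 1; rw [sig_sig (n - 2) (m - 1) hnm' k])]
        ring
      rw [hswap] at h
      -- collapse the inner sum of the goal
      have inner : ∀ k : Fin (n - 2),
          (∑ l, (starRingEnd ℂ)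
              (M ⟨k.1 + 1, by have := k.isLt; omega⟩ ⟨n - 1, by omega⟩) *
            Hmat (n - 2) (m - 1) k l *
            M ⟨l.1 + 1, by have := l.isLt; omega⟩ ⟨j.1 + 1, by have := j.isLt; omega⟩)
          = (starRingEnd ℂ) (M ⟨k.1 + 1, by have := k.isLt; omega⟩ ⟨n - 1, by omega⟩) *
            M ⟨(sig (n - 2) (m - 1) k).1 + 1,
              by have := (sig (n - 2) (m - 1) k).isLt; omega⟩
              ⟨j.1 + 1, by have := j.isLt; omega⟩ := by
        intro k
        simp only [Hmat_apply (n - 2) (m - 1) hnm', mul_ite, mul_one, mul_zero,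
          ite_mul, zero_mul]
        rw [Finset.sum_ite_eq' Finset.univ (sig (n - 2) (m - 1) k)]
        rw [if_pos (Finset.mem_univ _)]
      simp only [inner]
      -- conclude by field arithmetic
      have hμ' : M ⟨0, by omega⟩ ⟨0, by omega⟩ ≠ 0 := hμ
      field_simp at h
      linear_combination h
    ext i j
    obtain ⟨iv, hivlt⟩ := i
    obtain ⟨jv, hjvlt⟩ := j
    simp only [mkS]
    by_cases hi0 : iv = 0
    · subst hi0
      rw [dif_pos rfl]
      by_cases hj0 : jv = 0
      · subst hj0
        rw [dif_pos rfl]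
      · rw [dif_neg hj0]
        by_cases hjn : jv = n - 1
        · subst hjn
          rw [dif_pos rfl]
        · rw [dif_neg hjn]
          obtain ⟨jv', rfl⟩ : ∃ t, jv = t + 1 := ⟨jv - 1, by omega⟩
          exact hrowJ ⟨jv', by omega⟩
    · rw [dif_neg hi0]
      by_cases hin : iv = n - 1
      · subst hin
        rw [dif_pos rfl]
        by_cases hjn : jv = n - 1
        · subst hjn
          rw [if_pos rfl]
          exact hnn
        · rw [if_neg hjn]
          exact hP2 ⟨jv, hjvlt⟩ hjn
      · rw [dif_neg hin]
        by_cases hj0 : jv = 0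
        · subst hj0
          rw [dif_pos rfl]
          exact hP1 ⟨iv, hivlt⟩ hi0
        · rw [dif_neg hj0]
          obtain ⟨iv', rfl⟩ : ∃ t, iv = t + 1 := ⟨iv - 1, by omega⟩
          by_cases hjn : jv = n - 1
          · subst hjn
            rw [dif_pos rfl]
            rfl
          · rw [dif_neg hjn]
            obtain ⟨jv', rfl⟩ : ∃ t, jv = t + 1 := ⟨jv - 1, by omega⟩
            rfl

/-- For M ∈ SU(H), lying in the parabolic subgroup P¹ (zero first column below
the corner), lying in P² (zero last row before the corner), and having the
block form (formalgebra) are all equivalent; i.e. P¹ ∩ SU(H) = P² ∩ SU(H) = S₁. -/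
theorem stmt3 (n m : ℕ) (hm : 1 ≤ m) (hn : 3 ≤ n) (hnm : 2 * m ≤ n)
    (M : Matrix (Fin n) (Fin n) ℂ) (hdet : M.det = 1)
    (hM : M.transpose * Hmat n m * M.map (starRingEnd ℂ) = Hmat n m) :
    ((∀ i : Fin n, i.1 ≠ 0 → M i ⟨0, by omega⟩ = 0) ↔
      (∀ j : Fin n, j.1 ≠ n - 1 → M ⟨n - 1, by omega⟩ j = 0)) ∧
    ((∀ i : Fin n, i.1 ≠ 0 → M i ⟨0, by omega⟩ = 0) ↔
      (∃ (μ c : ℂ) (x : Fin (n - 2) → ℂ) (A : Matrix (Fin (n - 2)) (Fin (n - 2)) ℂ),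
        μ ≠ 0 ∧
        A.transpose * Hmat (n - 2) (m - 1) * A.map (starRingEnd ℂ) = Hmat (n - 2) (m - 1) ∧
        2 * (c / μ).re + (dotProduct x ((Hmat (n - 2) (m - 1)).mulVec (star x))).re = 0 ∧
        M = mkS n m μ c x A)) := by
  have h12 : (∀ i : Fin n, i.1 ≠ 0 → M i ⟨0, by omega⟩ = 0) ↔
      (∀ j : Fin n, j.1 ≠ n - 1 → M ⟨n - 1, by omega⟩ j = 0) := by
    constructor
    · intro h
      exact (p1_facts n m hm hn hnm M hM h).2.2
    · intro h
      exact p2_imp_p1 n m hm hn hnm M hM h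
  refine ⟨h12, ?_, ?_⟩
  · intro h
    exact exists_form n m hm hn hnm M hM h
  · rintro ⟨μ, c, x, A, hμ, hA, hsc, rfl⟩ i hi
    simp only [mkS]
    rw [dif_neg hi]
    by_cases hin : i.1 = n - 1
    · rw [dif_pos hin, if_neg (by show ¬(0 = n - 1); omega)]
    · rw [dif_neg hin]
      simp
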